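/- Let F : ℝ → ℝ be C¹, non-negative, with F(v) = 0 iff v = 1, and satisfying F'(v)(v−1) ≥ 0 for all v. Fix c < 1 and for s in [0, s*) with s* = ∫_c^1 dz/√(F(z)) define ψ(s) by ∫_c^{ψ(s)} dz/√(F(z)) = s. Then for every δ > 0 with 1/δ < s*, F(ψ(1/δ))/δ² ≤ (1−c)². -/

import Mathlib

open Set intervalIntegral

theorem stmt2 (F : ℝ → ℝ) (hF1 : ContDiff ℝ 1 F) (hFnn : ∀ v, 0 ≤ F v)
    (hFzero : ∀ v, F v = 0 ↔ v = 1)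
    (hF2' : ∀ v, 0 ≤ deriv F v * (v - 1))
    (c : ℝ) (hc : c < 1)
    (sStar : ℝ) (hsStar : sStar = ∫ z in c..1, (Real.sqrt (F z))⁻¹)
    (ψ : ℝ → ℝ)
    (hψmem : ∀ s ∈ Ico (0 : ℝ) sStar, ψ s ∈ Ico c 1)
    (hψdef : ∀ s ∈ Ico (0 : ℝ) sStar, (∫ z in c..ψ s, (Real.sqrt (F z))⁻¹) = s)
    (δ : ℝ) (hδ : 0 < δ) (hδs : 1 / δ < sStar) :
    F (ψ (1 / δ)) / δ ^ 2 ≤ (1 - c) ^ 2 := by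
  have hs0 : (0:ℝ) ≤ 1/δ := by positivity
  have hmem := hψmem (1/δ) ⟨hs0, hδs⟩
  have hdef := hψdef (1/δ) ⟨hs0, hδs⟩
  set p := ψ (1/δ) with hp
  obtain ⟨hcp, hp1⟩ := hmem
  have hFp : 0 < F p :=
    lt_of_le_of_ne (hFnn p) (fun h => absurd ((hFzero p).mp h.symm) (ne_of_lt hp1))
  have hanti : AntitoneOn F (Icc c 1) := by
    apply antitoneOn_of_deriv_nonpos (convex_Icc c 1) hF1.continuous.continuousOn
    · exact fun x hx => (hF1.differentiable one_ne_zero x).differentiableWithinAt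
    · intro x hx
      rw [interior_Icc] at hx
      nlinarith [hF2' x, hx.2]
  have hFpos : ∀ z ∈ Icc c p, 0 < F z := by
    intro z hz
    refine lt_of_le_of_ne (hFnn z) (fun h => ?_)
    have := (hFzero z).mp h.symm
    have := hz.2
    linarith
  have hcont : ContinuousOn (fun z => (Real.sqrt (F z))⁻¹) (Icc c p) := by
    apply ContinuousOn.inv₀
    · exact (Real.continuous_sqrt.comp hF1.continuous).continuousOn
    · exact fun z hz => ne_of_gt (Real.sqrt_pos.mpr (hFpos z hz))
  have hint : IntervalIntegrable (fun z => (Real.sqrt (F z))⁻¹) MeasureTheory.volume c p := by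
    apply ContinuousOn.intervalIntegrable
    rwa [uIcc_of_le hcp]
  have hsq : 0 < Real.sqrt (F p) := Real.sqrt_pos.mpr hFp
  have hle : (1/δ) ≤ (p - c) * (Real.sqrt (F p))⁻¹ := by
    rw [← hdef]
    calc (∫ z in c..p, (Real.sqrt (F z))⁻¹)
        ≤ ∫ _ in c..p, (Real.sqrt (F p))⁻¹ := by
          apply intervalIntegral.integral_mono_on hcp hint intervalIntegrable_const
          intro z hz
          apply inv_anti₀ hsq
          exact Real.sqrt_le_sqrt
            (hanti ⟨hz.1, le_of_lt (lt_of_le_of_lt hz.2 hp1)⟩ ⟨hcp, le_of_lt hp1⟩ hz.2)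
      _ = (p - c) * (Real.sqrt (F p))⁻¹ := by
          rw [intervalIntegral.integral_const, smul_eq_mul]
  have h2 : Real.sqrt (F p) ≤ (1 - c) * δ := by
    have h3 : 1/δ ≤ (1 - c) * (Real.sqrt (F p))⁻¹ := by
      refine hle.trans (mul_le_mul_of_nonneg_right (by linarith) (inv_nonneg.mpr hsq.le))
    rw [← div_eq_mul_inv, div_le_div_iff₀ hδ hsq] at h3
    linarith
  rw [div_le_iff₀ (by positivity)]
  nlinarith [Real.sq_sqrt (hFnn p), Real.sqrt_nonneg (F p)]
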